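/- Let the chain be a t.e.m. chain and let (S_n) be nonempty subsets of ℕ with π(S_n) → 0. Set ε_n := sup_{i∈S_n^c} p(i,S_n) and let P_n = (p(i,k))_{i,k∈S_n^c} be the substochastic matrix of transitions within S_n^c = ℕ∖S_n. Then for all n sufficiently large, P_n has an eigenvalue λ_n ∈ [1 − ε_n, 1) with a corresponding eigenvector f_n : S_n^c → ℝ (that is, ∑_{k∈S_n^c} p(i,k) f_n(k) = λ_n f_n(i) for all i ∈ S_n^c) satisfying 1 ≤ f_n(i) ≤ 1/(1 − (6/δ₀)ε_n) for all i ∈ S_n^c. -/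

import Mathlib

open MeasureTheory Filter

/-- `n`-step transition probabilities of the matrix `p`. -/
noncomputable def matPow (p : ℕ → ℕ → ℝ) : ℕ → ℕ → ℕ → ℝ
  | 0 => fun i j => if i = j then 1 else 0
  | n + 1 => fun i j => ∑' k, matPow p n i k * p k j

/-- An ergodic (irreducible, aperiodic, positive recurrent) Markov transition matrix `p`
on `ℕ` with stationary distribution `pi`. -/
structure IsErgodicChain (p : ℕ → ℕ → ℝ) (pi : ℕ → ℝ) : Prop where
  nonneg : ∀ i k, 0 ≤ p i k
  rowSum : ∀ i, HasSum (p i) 1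
  piPos : ∀ k, 0 < pi k
  piSum : HasSum pi 1
  piStat : ∀ k, HasSum (fun i => pi i * p i k) (pi k)
  irred : ∀ i j, ∃ n, 0 < matPow p n i j
  aperiodic : ∀ i, ∃ N, ∀ n, N ≤ n → 0 < matPow p n i i

/-- `P i` is the law on path space of the Markov chain with transition matrix `p`
started at `X(0) = i`: it is specified by its finite-dimensional distributions. -/
def IsChainLaw (p : ℕ → ℕ → ℝ) (P : ℕ → Measure (ℕ → ℕ)) : Prop :=
  (∀ i, IsProbabilityMeasure (P i)) ∧
  ∀ i m (path : ℕ → ℕ),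
    P i {ω | ∀ t ≤ m, ω t = path t} =
      (if path 0 = i then (1 : ENNReal) else 0) *
        ENNReal.ofReal (∏ t ∈ Finset.range m, p (path t) (path (t + 1)))

/-- Positive hitting time `T(S) = min {t ≥ 1 : X(t) ∈ S}` (with value `0` if `S` is never hit). -/
noncomputable def hitTime (S : Set ℕ) (ω : ℕ → ℕ) : ℕ :=
  sInf {t | 1 ≤ t ∧ ω t ∈ S}

/-- `π(S) = ∑_{k ∈ S} π(k)`. -/
noncomputable def setMass (pi : ℕ → ℝ) (S : Set ℕ) : ℝ := ∑' k, S.indicator pi k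

/-- Tightness of the family of rows: `sup_i ∑_{k > n} p(i,k) → 0`. -/
def TightChain (p : ℕ → ℕ → ℝ) : Prop :=
  Tendsto (fun n : ℕ => ⨆ i, ∑' k, {k : ℕ | n < k}.indicator (p i) k) atTop (nhds 0)

/-- `p(S) = sup_i p(i,S) = sup_i ∑_{k ∈ S} p(i,k)`. -/
noncomputable def pSup (p : ℕ → ℕ → ℝ) (S : Set ℕ) : ℝ :=
  ⨆ i, ∑' k, S.indicator (p i) k

/-- `δ₀ = inf_{i,j} ∑_k p(i,k) p(j,k)`. -/
noncomputable def delta0 (p : ℕ → ℕ → ℝ) : ℝ :=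
  ⨅ i, ⨅ j, ∑' k, p i k * p j k

/-- `ε_n = sup_{i ∈ Sᶜ} p(i, S)`. -/
noncomputable def epsSup (p : ℕ → ℕ → ℝ) (S : Set ℕ) : ℝ :=
  ⨆ i : ↥(Sᶜ), ∑' k, S.indicator (p (i : ℕ)) k


open Topology

set_option maxHeartbeats 1000000

namespace TemEig

theorem matPow_nonneg {p : ℕ → ℕ → ℝ} (hp0 : ∀ i k, 0 ≤ p i k) :
    ∀ n i j, 0 ≤ matPow p n i j := by
  intro n
  induction n with
  | zero => intro i j; simp only [matPow]; split <;> norm_num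
  | succ n ih =>
    intro i j
    exact tsum_nonneg fun l => mul_nonneg (ih i l) (hp0 l j)

/-- Context for the core construction. -/
structure Ctx (p : ℕ → ℕ → ℝ) (S : Set ℕ) (ε δ : ℝ) : Prop where
  hp0 : ∀ i k, 0 ≤ p i k
  hp1 : ∀ i, HasSum (p i) 1
  hAne : Sᶜ.Nonempty
  hδpos : 0 < δ
  hδ1 : δ ≤ 1
  hδ : ∀ i j, δ ≤ ∑' k, p i k * p j k
  hε0 : 0 ≤ ε
  hεS : ∀ i ∈ Sᶜ, (∑' k, S.indicator (p i) k) ≤ ε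
  hεδ : ε ≤ δ ^ 2 / 100

variable {p : ℕ → ℕ → ℝ} {S : Set ℕ} {ε δ : ℝ}

theorem Ctx.psummable (hc : Ctx p S ε δ) (i : ℕ) : Summable (p i) := (hc.hp1 i).summable

theorem Ctx.psum (hc : Ctx p S ε δ) (i : ℕ) : ∑' k, p i k = 1 := (hc.hp1 i).tsum_eq

theorem Ctx.p_le_one (hc : Ctx p S ε δ) (i k : ℕ) : p i k ≤ 1 := by
  have := Summable.le_tsum (hc.psummable i) k (fun j _ => hc.hp0 i j)
  rwa [hc.psum i] at this

theorem Ctx.hε1 (hc : Ctx p S ε δ) : ε ≤ 1 / 100 := by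
  have h1 : δ ^ 2 ≤ 1 := by nlinarith [hc.hδpos, hc.hδ1]
  have := hc.hεδ; linarith

theorem Ctx.hεδ' (hc : Ctx p S ε δ) : ε ≤ δ / 100 := by
  have h1 : δ ^ 2 ≤ δ := by nlinarith [hc.hδpos, hc.hδ1]
  have := hc.hεδ; linarith

theorem Ctx.hd_pos (hc : Ctx p S ε δ) : 0 < δ - ε := by
  have := hc.hεδ'; have := hc.hδpos; linarith

theorem Ctx.hd_lb (hc : Ctx p S ε δ) : 99 / 100 * δ ≤ δ - ε := by
  have := hc.hεδ'; linarith

theorem Ctx.hd_le (hc : Ctx p S ε δ) : δ - ε ≤ 1 := by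
  have := hc.hε0; have := hc.hδ1; linarith


theorem ind_nonneg {B : Set ℕ} {f : ℕ → ℝ} (hf : ∀ k ∈ B, 0 ≤ f k) (k : ℕ) :
    0 ≤ B.indicator f k := Set.indicator_nonneg hf k

theorem ind_le {B : Set ℕ} {f c : ℕ → ℝ} (hf : ∀ k ∈ B, f k ≤ c k) (hc : ∀ k, 0 ≤ c k) (k : ℕ) :
    B.indicator f k ≤ c k := by
  by_cases h : k ∈ B
  · rw [Set.indicator_of_mem h]; exact hf k h
  · rw [Set.indicator_of_notMem h]; exact hc k

theorem ind_summable {B : Set ℕ} {f c : ℕ → ℝ} (h0 : ∀ k ∈ B, 0 ≤ f k)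
    (hf : ∀ k ∈ B, f k ≤ c k) (hc : ∀ k, 0 ≤ c k) (hsc : Summable c) :
    Summable (B.indicator f) :=
  Summable.of_nonneg_of_le (ind_nonneg h0) (ind_le hf hc) hsc

theorem ind_tsum_le_tsum {B : Set ℕ} {f c : ℕ → ℝ} (hf : ∀ k ∈ B, f k ≤ c k)
    (h0 : ∀ k ∈ B, 0 ≤ f k) (hc : ∀ k, 0 ≤ c k) (hsc : Summable c) :
    ∑' k, B.indicator f k ≤ ∑' k, c k :=
  Summable.tsum_le_tsum (ind_le hf hc) (ind_summable h0 hf hc hsc) hsc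

theorem ind_mono {B : Set ℕ} {f g : ℕ → ℝ} (h : ∀ k ∈ B, f k ≤ g k) (k : ℕ) :
    B.indicator f k ≤ B.indicator g k := by
  by_cases hk : k ∈ B
  · rw [Set.indicator_of_mem hk, Set.indicator_of_mem hk]; exact h k hk
  · rw [Set.indicator_of_notMem hk, Set.indicator_of_notMem hk]

/-- The iterates `g_t(i) = P_i(X_1, …, X_t ∈ Sᶜ)`. -/
noncomputable def gseq (p : ℕ → ℕ → ℝ) (S : Set ℕ) : ℕ → ℕ → ℝ
  | 0 => fun _ => 1
  | (t+1) => fun i => ∑' k, (Sᶜ).indicator (fun k => p i k * gseq p S t k) k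

theorem gseq_succ (p : ℕ → ℕ → ℝ) (S : Set ℕ) (t i : ℕ) :
    gseq p S (t+1) i = ∑' k, (Sᶜ).indicator (fun k => p i k * gseq p S t k) k := rfl

theorem Ctx.g_bounds (hc : Ctx p S ε δ) : ∀ t i, 0 ≤ gseq p S t i ∧ gseq p S t i ≤ 1 := by
  intro t
  induction t with
  | zero => intro i; exact ⟨zero_le_one, le_refl 1⟩
  | succ t ih =>
    intro i
    rw [gseq_succ]
    constructor
    · exact tsum_nonneg (ind_nonneg fun k _ => mul_nonneg (hc.hp0 i k) (ih k).1)
    · calc ∑' k, (Sᶜ).indicator (fun k => p i k * gseq p S t k) k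
          ≤ ∑' k, p i k := ind_tsum_le_tsum
            (fun k _ => by nlinarith [(ih k).1, (ih k).2, hc.hp0 i k])
            (fun k _ => mul_nonneg (hc.hp0 i k) (ih k).1) (hc.hp0 i) (hc.psummable i)
        _ = 1 := hc.psum i

theorem Ctx.g_nonneg (hc : Ctx p S ε δ) (t i : ℕ) : 0 ≤ gseq p S t i := (hc.g_bounds t i).1

theorem Ctx.g_le_one (hc : Ctx p S ε δ) (t i : ℕ) : gseq p S t i ≤ 1 := (hc.g_bounds t i).2

theorem Ctx.g_term_nonneg (hc : Ctx p S ε δ) (t i : ℕ) :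
    ∀ k ∈ Sᶜ, 0 ≤ p i k * gseq p S t k := fun k _ => mul_nonneg (hc.hp0 i k) (hc.g_nonneg t k)

theorem Ctx.g_term_le (hc : Ctx p S ε δ) (t i : ℕ) :
    ∀ k ∈ Sᶜ, p i k * gseq p S t k ≤ p i k := fun k _ => by
  nlinarith [hc.g_nonneg t k, hc.g_le_one t k, hc.hp0 i k]

theorem Ctx.g_summand_summable (hc : Ctx p S ε δ) (t i : ℕ) :
    Summable ((Sᶜ).indicator (fun k => p i k * gseq p S t k)) :=
  ind_summable (hc.g_term_nonneg t i) (hc.g_term_le t i) (hc.hp0 i) (hc.psummable i)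

theorem Ctx.g_anti (hc : Ctx p S ε δ) : ∀ t i, gseq p S (t+1) i ≤ gseq p S t i := by
  intro t
  induction t with
  | zero => intro i; exact hc.g_le_one 1 i
  | succ t ih =>
    intro i
    rw [gseq_succ, gseq_succ]
    exact Summable.tsum_le_tsum (ind_mono fun k _ => by nlinarith [ih k, hc.hp0 i k])
      (hc.g_summand_summable (t+1) i) (hc.g_summand_summable t i)

theorem Ctx.ind_split (hc : Ctx p S ε δ) {f : ℕ → ℝ} (hs : Summable f) :
    ∑' k, S.indicator f k + ∑' k, (Sᶜ).indicator f k = ∑' k, f k := by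
  rw [← Summable.tsum_add (hs.indicator S) (hs.indicator Sᶜ)]
  congr 1
  ext k
  have := congrFun (Set.indicator_self_add_compl S f) k
  simpa using this

theorem Ctx.pA_lb (hc : Ctx p S ε δ) {i : ℕ} (hi : i ∈ Sᶜ) :
    1 - ε ≤ ∑' k, (Sᶜ).indicator (p i) k := by
  have hsplit := hc.ind_split (f := p i) (hc.psummable i)
  rw [hc.psum i] at hsplit
  have := hc.hεS i hi
  linarith

theorem Ctx.g_lb_succ (hc : Ctx p S ε δ) : ∀ t, ∀ i ∈ Sᶜ,
    (1 - ε) * gseq p S t i ≤ gseq p S (t+1) i := by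
  intro t
  induction t with
  | zero =>
    intro i hi
    have h1 : gseq p S 1 i = ∑' k, (Sᶜ).indicator (p i) k := by
      rw [gseq_succ]; congr 1; ext k; congr 1; ext k'
      show p i k' * gseq p S 0 k' = p i k'
      simp [gseq]
    have h0 : gseq p S 0 i = 1 := rfl
    rw [h0, mul_one, h1]
    exact hc.pA_lb hi
  | succ t ih =>
    intro i _
    rw [gseq_succ, gseq_succ (t := t+1)]
    have hsum : ∑' k, (Sᶜ).indicator (fun k => (1-ε) * (p i k * gseq p S t k)) k
        = (1-ε) * ∑' k, (Sᶜ).indicator (fun k => p i k * gseq p S t k) k := by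
      rw [← tsum_mul_left]
      congr 1; ext k
      by_cases hk : k ∈ Sᶜ
      · rw [Set.indicator_of_mem hk, Set.indicator_of_mem hk]
      · rw [Set.indicator_of_notMem hk, Set.indicator_of_notMem hk, mul_zero]
    rw [← hsum]
    refine Summable.tsum_le_tsum (ind_mono fun k hk => ?_) ?_ (hc.g_summand_summable (t+1) i)
    · have := ih k hk
      nlinarith [hc.hp0 i k]
    · have h1ε : 0 ≤ 1 - ε := by have := hc.hε1; linarith
      refine ind_summable (fun k hk => ?_) (fun k hk => ?_) (hc.hp0 i) (hc.psummable i)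
      · exact mul_nonneg h1ε (mul_nonneg (hc.hp0 i k) (hc.g_nonneg t k))
      · have hg1 : (1-ε) * gseq p S t k ≤ 1 := by
          nlinarith [hc.g_nonneg t k, hc.g_le_one t k, hc.hε0]
        calc (1-ε) * (p i k * gseq p S t k) = p i k * ((1-ε) * gseq p S t k) := by ring
          _ ≤ p i k * 1 := mul_le_mul_of_nonneg_left hg1 (hc.hp0 i k)
          _ = p i k := mul_one _

theorem Ctx.g_lb (hc : Ctx p S ε δ) : ∀ t, ∀ i ∈ Sᶜ, (1 - ε)^t ≤ gseq p S t i := by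
  intro t
  induction t with
  | zero => intro i _; simp [gseq]
  | succ t ih =>
    intro i hi
    calc (1-ε)^(t+1) = (1-ε) * (1-ε)^t := by ring
    _ ≤ (1-ε) * gseq p S t i := by
        have h1ε : 0 ≤ 1 - ε := by have := hc.hε1; linarith
        nlinarith [ih i hi]
    _ ≤ gseq p S (t+1) i := hc.g_lb_succ t i hi

theorem Ctx.g_pos (hc : Ctx p S ε δ) (t : ℕ) {i : ℕ} (hi : i ∈ Sᶜ) : 0 < gseq p S t i := by
  have h1ε : 0 < 1 - ε := by have := hc.hε1; linarith
  exact lt_of_lt_of_le (pow_pos h1ε t) (hc.g_lb t i hi)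


/-- Ratio sequence `h_t(i) = g_{t+1}(i)/g_t(i)`. -/
noncomputable def hseq (p : ℕ → ℕ → ℝ) (S : Set ℕ) (t i : ℕ) : ℝ :=
  gseq p S (t+1) i / gseq p S t i

theorem Ctx.g_succ_eq_mul (hc : Ctx p S ε δ) (t : ℕ) {i : ℕ} (hi : i ∈ Sᶜ) :
    gseq p S (t+1) i = gseq p S t i * hseq p S t i := by
  rw [hseq, mul_div_cancel₀ _ (ne_of_gt (hc.g_pos t hi))]

theorem Ctx.h_le_one (hc : Ctx p S ε δ) (t : ℕ) {i : ℕ} (hi : i ∈ Sᶜ) :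
    hseq p S t i ≤ 1 :=
  (div_le_one (hc.g_pos t hi)).mpr (hc.g_anti t i)

theorem Ctx.h_lb (hc : Ctx p S ε δ) (t : ℕ) {i : ℕ} (hi : i ∈ Sᶜ) :
    1 - ε ≤ hseq p S t i := by
  rw [hseq, le_div_iff₀ (hc.g_pos t hi)]
  calc (1-ε) * gseq p S t i ≤ gseq p S (t+1) i := hc.g_lb_succ t i hi

theorem Ctx.h_pos (hc : Ctx p S ε δ) (t : ℕ) {i : ℕ} (hi : i ∈ Sᶜ) : 0 < hseq p S t i := by
  have := hc.h_lb t hi; have := hc.hε1; linarith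

/-- Contraction factor. -/
noncomputable def gam (δ ε : ℝ) : ℝ := 1 - (δ - ε)/3

/-- Ratio-bound constant. -/
noncomputable def Cinf (δ ε : ℝ) : ℝ := 3*ε/((1-ε)*(δ-ε))

/-- Cumulative ratio bounds. -/
noncomputable def Bprod (δ ε : ℝ) : ℕ → ℝ
  | 0 => 1
  | (t+1) => Bprod δ ε t * (1 + ε/(1-ε) * gam δ ε ^ t)

theorem Ctx.gam_lt_one (hc : Ctx p S ε δ) : gam δ ε < 1 := by
  have := hc.hd_pos; rw [gam]; linarith

theorem Ctx.gam_lb (hc : Ctx p S ε δ) : 2/3 ≤ gam δ ε := by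
  have := hc.hd_le; rw [gam]; linarith

theorem Ctx.gam_nonneg (hc : Ctx p S ε δ) : 0 ≤ gam δ ε := by
  have := hc.gam_lb; linarith

theorem Ctx.gam_pow_le_one (hc : Ctx p S ε δ) (t : ℕ) : gam δ ε ^ t ≤ 1 :=
  pow_le_one₀ hc.gam_nonneg hc.gam_lt_one.le

theorem Ctx.one_sub_gam (hc : Ctx p S ε δ) : 1 - gam δ ε = (δ - ε)/3 := by rw [gam]; ring

theorem Ctx.Cinf_nonneg (hc : Ctx p S ε δ) : 0 ≤ Cinf δ ε := by
  have h1 : (0:ℝ) < 1 - ε := by have := hc.hε1; linarith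
  exact div_nonneg (by linarith [hc.hε0]) (mul_nonneg h1.le hc.hd_pos.le)

theorem Ctx.six_eps_le (hc : Ctx p S ε δ) : 6*ε/δ ≤ 3/50 := by
  rw [div_le_iff₀ hc.hδpos]
  have := hc.hεδ'; linarith

theorem Ctx.Cinf_le_six (hc : Ctx p S ε δ) : Cinf δ ε ≤ 6*ε/δ := by
  have h1 : (0:ℝ) < 1 - ε := by have := hc.hε1; linarith
  have h2 := hc.hd_pos
  have h3 := hc.hd_lb
  have h4 : (99:ℝ)/100 ≤ 1 - ε := by have := hc.hε1; linarith
  rw [Cinf, div_le_div_iff₀ (mul_pos h1 h2) hc.hδpos]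
  have key : (99/100 : ℝ) * (99/100 * δ) ≤ (1-ε) * (δ-ε) :=
    mul_le_mul h4 h3 (by linarith [hc.hδpos]) h1.le
  nlinarith [hc.hε0, hc.hδpos]

theorem Ctx.Cinf_le (hc : Ctx p S ε δ) : Cinf δ ε ≤ 3/50 :=
  le_trans hc.Cinf_le_six hc.six_eps_le

theorem Ctx.c_eq (hc : Ctx p S ε δ) : ε/(1-ε) = Cinf δ ε * (1 - gam δ ε) := by
  have h1 : (1:ℝ) - ε ≠ 0 := by have := hc.hε1; intro h; linarith [hc.hε1]
  have h2 : δ - ε ≠ 0 := ne_of_gt hc.hd_pos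
  rw [Cinf, hc.one_sub_gam]
  field_simp

theorem Ctx.B_le (hc : Ctx p S ε δ) :
    ∀ t, Bprod δ ε t ≤ 1/(1 - Cinf δ ε * (1 - gam δ ε ^ t)) := by
  intro t
  have hC0 := hc.Cinf_nonneg
  have hC := hc.Cinf_le
  have hγ0 := hc.gam_nonneg
  have hγ1 := hc.gam_lt_one.le
  induction t with
  | zero => simp [Bprod]
  | succ t ih =>
    have hx0 : (0:ℝ) ≤ gam δ ε ^ t := pow_nonneg hγ0 t
    have hx1 : gam δ ε ^ t ≤ 1 := hc.gam_pow_le_one t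
    have hD1 : (0:ℝ) < 1 - Cinf δ ε * (1 - gam δ ε ^ t) := by nlinarith
    have hD2 : (0:ℝ) < 1 - Cinf δ ε * (1 - gam δ ε ^ (t+1)) := by
      have : (0:ℝ) ≤ gam δ ε ^ (t+1) := pow_nonneg hγ0 _
      have : gam δ ε ^ (t+1) ≤ 1 := hc.gam_pow_le_one _
      nlinarith
    have hfac : (0:ℝ) ≤ 1 + ε/(1-ε) * gam δ ε ^ t := by
      rw [hc.c_eq]; nlinarith
    show Bprod δ ε t * (1 + ε/(1-ε) * gam δ ε ^ t) ≤ _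
    calc Bprod δ ε t * (1 + ε/(1-ε) * gam δ ε ^ t)
        ≤ (1/(1 - Cinf δ ε * (1 - gam δ ε ^ t))) * (1 + ε/(1-ε) * gam δ ε ^ t) :=
          mul_le_mul_of_nonneg_right ih hfac
      _ ≤ 1/(1 - Cinf δ ε * (1 - gam δ ε ^ (t+1))) := by
          rw [div_mul_eq_mul_div, div_le_div_iff₀ hD1 hD2, hc.c_eq]
          have hpow : gam δ ε ^ (t+1) = gam δ ε * gam δ ε ^ t := by ring
          rw [hpow]
          have hgx : (0:ℝ) ≤ 1 - gam δ ε * gam δ ε ^ t := by nlinarith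
          have key : 0 ≤ Cinf δ ε * Cinf δ ε * ((1 - gam δ ε) * (gam δ ε ^ t *
              (1 - gam δ ε * gam δ ε ^ t))) :=
            mul_nonneg (mul_nonneg hC0 hC0) (mul_nonneg (by linarith) (mul_nonneg hx0 hgx))
          nlinarith [key]

theorem Ctx.B_le' (hc : Ctx p S ε δ) (t : ℕ) : Bprod δ ε t ≤ 1/(1 - Cinf δ ε) := by
  refine le_trans (hc.B_le t) ?_
  have hC0 := hc.Cinf_nonneg
  have hC := hc.Cinf_le
  have hx0 : (0:ℝ) ≤ gam δ ε ^ t := pow_nonneg hc.gam_nonneg t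
  have hx1 : gam δ ε ^ t ≤ 1 := hc.gam_pow_le_one t
  have hD1 : (0:ℝ) < 1 - Cinf δ ε * (1 - gam δ ε ^ t) := by nlinarith
  have hD2 : (0:ℝ) < 1 - Cinf δ ε := by nlinarith
  rw [div_le_div_iff₀ hD1 hD2]
  nlinarith [mul_nonneg hC0 hx0]

theorem Ctx.B_le_three (hc : Ctx p S ε δ) (t : ℕ) : Bprod δ ε t ≤ 3 := by
  refine le_trans (hc.B_le' t) ?_
  have hC0 := hc.Cinf_nonneg
  have hC := hc.Cinf_le
  rw [div_le_iff₀ (by linarith : (0:ℝ) < 1 - Cinf δ ε)]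
  linarith

theorem Ctx.B_nonneg (hc : Ctx p S ε δ) : ∀ t, 0 ≤ Bprod δ ε t := by
  intro t
  induction t with
  | zero => norm_num [Bprod]
  | succ t ih =>
    have h1 : (0:ℝ) < 1 - ε := by have := hc.hε1; linarith
    have : (0:ℝ) ≤ ε/(1-ε) * gam δ ε ^ t :=
      mul_nonneg (div_nonneg hc.hε0 h1.le) (pow_nonneg hc.gam_nonneg t)
    show (0:ℝ) ≤ Bprod δ ε t * (1 + ε/(1-ε) * gam δ ε ^ t)
    nlinarith


theorem ind_tsum_mul_const {B : Set ℕ} (f : ℕ → ℝ) (c : ℝ) :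
    ∑' k, B.indicator (fun k => f k * c) k = (∑' k, B.indicator f k) * c := by
  rw [← tsum_mul_right]
  congr 1; ext k
  by_cases hk : k ∈ B
  · rw [Set.indicator_of_mem hk, Set.indicator_of_mem hk]
  · rw [Set.indicator_of_notMem hk, Set.indicator_of_notMem hk, zero_mul]

theorem ind_tsum_add {B : Set ℕ} {f g : ℕ → ℝ} (hf : Summable (B.indicator f))
    (hg : Summable (B.indicator g)) :
    ∑' k, B.indicator (fun k => f k + g k) k
      = ∑' k, B.indicator f k + ∑' k, B.indicator g k := by
  rw [← Summable.tsum_add hf hg]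
  congr 1; ext k
  by_cases hk : k ∈ B
  · rw [Set.indicator_of_mem hk, Set.indicator_of_mem hk, Set.indicator_of_mem hk]
  · rw [Set.indicator_of_notMem hk, Set.indicator_of_notMem hk,
      Set.indicator_of_notMem hk, add_zero]

theorem Ctx.dob (hc : Ctx p S ε δ) (t : ℕ)
    (H1 : ∀ i ∈ Sᶜ, ∀ j ∈ Sᶜ, hseq p S t i - hseq p S t j ≤ ε * gam δ ε ^ t)
    (HQ : ∀ i ∈ Sᶜ, ∀ j ∈ Sᶜ, gseq p S t i ≤ 3 * gseq p S t j) :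
    (∀ i ∈ Sᶜ, ∀ j ∈ Sᶜ,
      hseq p S (t+1) i - hseq p S (t+1) j ≤ gam δ ε * (ε * gam δ ε ^ t)) ∧
    (∀ i ∈ Sᶜ, |hseq p S (t+1) i - hseq p S t i| ≤ ε * gam δ ε ^ t) := by
  have hε1 := hc.hε1
  have hγ0 := hc.gam_nonneg
  have hγ1 := hc.gam_lt_one.le
  have hD0 : 0 ≤ ε * gam δ ε ^ t := mul_nonneg hc.hε0 (pow_nonneg hγ0 t)
  have hDε : ε * gam δ ε ^ t ≤ ε := mul_le_of_le_one_right hc.hε0 (hc.gam_pow_le_one t)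
  have hD1 : ε * gam δ ε ^ t ≤ 1 := by linarith
  set D := ε * gam δ ε ^ t with hDdef
  haveI : Nonempty ↥(Sᶜ) := hc.hAne.to_subtype
  have hbdd : BddBelow (Set.range fun k : ↥(Sᶜ) => hseq p S t k) := by
    refine ⟨1 - ε, ?_⟩
    rintro x ⟨k, rfl⟩
    exact hc.h_lb t k.2
  set μ := ⨅ k : ↥(Sᶜ), hseq p S t k with hμdef
  have hμle : ∀ k ∈ Sᶜ, μ ≤ hseq p S t k := fun k hk => ciInf_le hbdd ⟨k, hk⟩
  have hμub : ∀ k ∈ Sᶜ, hseq p S t k ≤ μ + D := by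
    intro k hk
    have : hseq p S t k - D ≤ μ := le_ciInf fun l => by
      have := H1 k hk l l.2; linarith
    linarith
  have hμ1 : 1 - ε ≤ μ := le_ciInf fun k => hc.h_lb t k.2
  have hμ0 : 0 ≤ μ := by linarith
  set u : ℕ → ℝ := fun k => hseq p S t k - μ with hudef
  have hu : ∀ k ∈ Sᶜ, 0 ≤ u k ∧ u k ≤ D := fun k hk =>
    ⟨by have := hμle k hk; simp only [hudef]; linarith,
     by have := hμub k hk; simp only [hudef]; linarith⟩
  have sumA : ∀ (i : ℕ) (F : ℕ → ℝ), (∀ k ∈ Sᶜ, 0 ≤ F k) → (∀ k ∈ Sᶜ, F k ≤ p i k) →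
      Summable ((Sᶜ).indicator F) := fun i F h0 h1 =>
    ind_summable h0 h1 (hc.hp0 i) (hc.psummable i)
  have hbFgu : ∀ (i : ℕ), ∀ k ∈ Sᶜ, 0 ≤ p i k * gseq p S t k * u k ∧
      p i k * gseq p S t k * u k ≤ p i k := by
    intro i k hk
    obtain ⟨hu0, huD⟩ := hu k hk
    have h1 := hc.hp0 i k
    have h2 := hc.g_nonneg t k
    have h3 := hc.g_le_one t k
    have e1 : p i k * gseq p S t k * u k ≤ p i k * gseq p S t k * 1 :=
      mul_le_mul_of_nonneg_left (le_trans huD hD1) (mul_nonneg h1 h2)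
    have e2 : p i k * gseq p S t k ≤ p i k * 1 := mul_le_mul_of_nonneg_left h3 h1
    constructor
    · positivity
    · nlinarith [e1, e2]
  set U : ℕ → ℝ := fun i => ∑' k, (Sᶜ).indicator (fun k => p i k * gseq p S t k * u k) k
    with hUdef
  have hU0 : ∀ i : ℕ, 0 ≤ U i := fun i =>
    tsum_nonneg (ind_nonneg fun k hk => (hbFgu i k hk).1)
  have hUsummable : ∀ i : ℕ, Summable ((Sᶜ).indicator (fun k => p i k * gseq p S t k * u k)) :=
    fun i => sumA i _ (fun k hk => (hbFgu i k hk).1) (fun k hk => (hbFgu i k hk).2)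
  -- decomposition g_{t+2}(i) = μ g_{t+1}(i) + U i
  have hdecomp : ∀ i : ℕ, gseq p S (t+2) i = μ * gseq p S (t+1) i + U i := by
    intro i
    have heq : (Sᶜ).indicator (fun k => p i k * gseq p S (t+1) k)
        = fun k => (Sᶜ).indicator (fun k => p i k * gseq p S t k * μ) k
          + (Sᶜ).indicator (fun k => p i k * gseq p S t k * u k) k := by
      ext k
      by_cases hk : k ∈ Sᶜ
      · rw [Set.indicator_of_mem hk, Set.indicator_of_mem hk, Set.indicator_of_mem hk]
        have : gseq p S (t+1) k = gseq p S t k * hseq p S t k := hc.g_succ_eq_mul t hk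
        rw [this]
        simp only [hudef]
        ring
      · rw [Set.indicator_of_notMem hk, Set.indicator_of_notMem hk,
          Set.indicator_of_notMem hk, add_zero]
    rw [gseq_succ p S (t+1) i, heq,
      Summable.tsum_add ((hc.g_summand_summable t i).mul_right μ |>.congr ?_) (hUsummable i)]
    · rw [ind_tsum_mul_const, gseq_succ p S t i, hUdef, mul_comm]
    · intro k
      by_cases hk : k ∈ Sᶜ
      · rw [Set.indicator_of_mem hk, Set.indicator_of_mem hk]
      · rw [Set.indicator_of_notMem hk, Set.indicator_of_notMem hk, zero_mul]
  have hrep : ∀ i ∈ Sᶜ, hseq p S (t+1) i = μ + U i / gseq p S (t+1) i := by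
    intro i hi
    have hgi := hc.g_pos (t+1) hi
    show gseq p S (t+2) i / gseq p S (t+1) i = _
    rw [hdecomp i]
    field_simp
  have hUD : ∀ i : ℕ, U i ≤ D * gseq p S (t+1) i := by
    intro i
    have h1 : ∑' k, (Sᶜ).indicator (fun k => p i k * gseq p S t k * u k) k
        ≤ ∑' k, (Sᶜ).indicator (fun k => p i k * gseq p S t k * D) k := by
      refine Summable.tsum_le_tsum (ind_mono fun k hk => ?_) (hUsummable i) ?_
      · obtain ⟨hu0, huD⟩ := hu k hk
        exact mul_le_mul_of_nonneg_left huD (mul_nonneg (hc.hp0 i k) (hc.g_nonneg t k))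
      · refine sumA i _ (fun k hk => ?_) (fun k hk => ?_)
        · exact mul_nonneg (mul_nonneg (hc.hp0 i k) (hc.g_nonneg t k)) hD0
        · have e1 : p i k * gseq p S t k * D ≤ p i k * gseq p S t k * 1 :=
            mul_le_mul_of_nonneg_left hD1 (mul_nonneg (hc.hp0 i k) (hc.g_nonneg t k))
          have e2 : p i k * gseq p S t k ≤ p i k * 1 :=
            mul_le_mul_of_nonneg_left (hc.g_le_one t k) (hc.hp0 i k)
          linarith
    rw [ind_tsum_mul_const (fun k => p i k * gseq p S t k) D] at h1
    calc U i ≤ (∑' k, (Sᶜ).indicator (fun k => p i k * gseq p S t k) k) * D := h1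
      _ = D * gseq p S (t+1) i := by rw [gseq_succ]; ring
  constructor
  · -- the contraction estimate
    intro i hi j hj
    have hgi := hc.g_pos (t+1) hi
    have hgj := hc.g_pos (t+1) hj
    set m : ℕ → ℝ := fun k => min (p i k) (p j k) with hmdef
    have hm0 : ∀ k, 0 ≤ m k := fun k => le_min (hc.hp0 i k) (hc.hp0 j k)
    have hmpi : ∀ k, m k ≤ p i k := fun k => min_le_left _ _
    have hmpj : ∀ k, m k ≤ p j k := fun k => min_le_right _ _
    -- mass of the overlap on Sᶜ
    have hm_summable : Summable m :=
      Summable.of_nonneg_of_le hm0 hmpi (hc.psummable i)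
    have hδm : δ ≤ ∑' k, m k := by
      refine le_trans (hc.hδ i j) (Summable.tsum_le_tsum (fun k => ?_) ?_ hm_summable)
      · exact le_min (by nlinarith [hc.hp0 i k, hc.hp0 j k, hc.p_le_one j k])
          (by nlinarith [hc.hp0 i k, hc.hp0 j k, hc.p_le_one i k])
      · exact Summable.of_nonneg_of_le (fun k => mul_nonneg (hc.hp0 i k) (hc.hp0 j k))
          (fun k => by nlinarith [hc.hp0 i k, hc.hp0 j k, hc.p_le_one j k]) (hc.psummable i)
    have hSm : ∑' k, S.indicator m k ≤ ε := by
      refine le_trans ?_ (hc.hεS i hi)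
      exact Summable.tsum_le_tsum (ind_mono fun k _ => hmpi k)
        (Summable.indicator hm_summable S) (Summable.indicator (hc.psummable i) S)
    have hmA : δ - ε ≤ ∑' k, (Sᶜ).indicator m k := by
      have := hc.ind_split (f := m) hm_summable
      linarith
    -- V = overlap-weighted mass
    set V : ℝ := ∑' k, (Sᶜ).indicator (fun k => m k * gseq p S t k) k with hVdef
    have hVsummable : Summable ((Sᶜ).indicator (fun k => m k * gseq p S t k)) := by
      refine sumA i _ (fun k hk => mul_nonneg (hm0 k) (hc.g_nonneg t k)) (fun k hk => ?_)
      nlinarith [hm0 k, hmpi k, hc.g_nonneg t k, hc.g_le_one t k, hc.hp0 i k]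
    have hV0 : 0 ≤ V := tsum_nonneg (ind_nonneg fun k hk =>
      mul_nonneg (hm0 k) (hc.g_nonneg t k))
    have hVlb : ∀ l ∈ Sᶜ, (δ - ε)/3 * gseq p S (t+1) l ≤ V := by
      intro l hl
      have h1 : ∑' k, (Sᶜ).indicator (fun k => m k * (gseq p S (t+1) l / 3)) k ≤ V := by
        refine Summable.tsum_le_tsum (ind_mono fun k hk => ?_) ?_ hVsummable
        · have h2 : gseq p S t l ≤ 3 * gseq p S t k := HQ l hl k hk
          have h3 : gseq p S (t+1) l ≤ gseq p S t l := hc.g_anti t l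
          have := hm0 k
          nlinarith
        · refine sumA i _ (fun k hk => ?_) (fun k hk => ?_)
          · have := hm0 k; have := (hc.g_pos (t+1) hl).le; positivity
          · have := hm0 k; have := hmpi k; have := hc.g_le_one (t+1) l
            have := (hc.g_pos (t+1) hl).le
            nlinarith [hc.hp0 i k]
      rw [ind_tsum_mul_const] at h1
      have := hmA
      have hgl := (hc.g_pos (t+1) hl).le
      nlinarith
    -- W = overlap-weighted mass of u
    set W : ℝ := ∑' k, (Sᶜ).indicator (fun k => m k * gseq p S t k * u k) k with hWdef
    have hWterm : ∀ k ∈ Sᶜ, 0 ≤ m k * gseq p S t k * u k ∧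
        m k * gseq p S t k * u k ≤ p i k := by
      intro k hk
      obtain ⟨hu0, huD⟩ := hu k hk
      have h1 := hm0 k; have h2 := hc.g_nonneg t k; have h3 := hc.g_le_one t k
      have h4 := hmpi k; have h5 := hc.hp0 i k
      constructor
      · positivity
      · have e1 : m k * gseq p S t k * u k ≤ m k * gseq p S t k * 1 :=
          mul_le_mul_of_nonneg_left (le_trans huD hD1) (mul_nonneg h1 h2)
        have e2 : m k * gseq p S t k ≤ m k * 1 := mul_le_mul_of_nonneg_left h3 h1
        linarith
    have hWsummable : Summable ((Sᶜ).indicator (fun k => m k * gseq p S t k * u k)) :=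
      sumA i _ (fun k hk => (hWterm k hk).1) (fun k hk => (hWterm k hk).2)
    have hW0 : 0 ≤ W := tsum_nonneg (ind_nonneg fun k hk => (hWterm k hk).1)
    have hWDV : W ≤ D * V := by
      have h1 : ∑' k, (Sᶜ).indicator (fun k => m k * gseq p S t k * u k) k
          ≤ ∑' k, (Sᶜ).indicator (fun k => m k * gseq p S t k * D) k := by
        refine Summable.tsum_le_tsum (ind_mono fun k hk => ?_) hWsummable ?_
        · obtain ⟨hu0, huD⟩ := hu k hk
          exact mul_le_mul_of_nonneg_left huD (mul_nonneg (hm0 k) (hc.g_nonneg t k))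
        · refine sumA i _ (fun k hk => ?_) (fun k hk => ?_)
          · exact mul_nonneg (mul_nonneg (hm0 k) (hc.g_nonneg t k)) hD0
          · have e1 : m k * gseq p S t k * D ≤ m k * gseq p S t k * 1 :=
              mul_le_mul_of_nonneg_left hD1 (mul_nonneg (hm0 k) (hc.g_nonneg t k))
            have e2 : m k * gseq p S t k ≤ m k * 1 := mul_le_mul_of_nonneg_left
              (hc.g_le_one t k) (hm0 k)
            have e3 : m k ≤ p i k := hmpi k
            linarith
      rw [ind_tsum_mul_const (fun k => m k * gseq p S t k) D] at h1
      rw [hWdef, hVdef]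
      rw [mul_comm]
      exact h1
    have hWUj : W ≤ U j := by
      refine Summable.tsum_le_tsum (ind_mono fun k hk => ?_) hWsummable (hUsummable j)
      obtain ⟨hu0, huD⟩ := hu k hk
      exact mul_le_mul_of_nonneg_right
        (mul_le_mul_of_nonneg_right (hmpj k) (hc.g_nonneg t k)) hu0
    -- U i ≤ W + D (g_{t+1}(i) - V)
    have hUiW : U i ≤ W + D * (gseq p S (t+1) i - V) := by
      have hterm : ∀ k ∈ Sᶜ, p i k * gseq p S t k * u k
          ≤ m k * gseq p S t k * u k + (p i k - m k) * gseq p S t k * D := by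
        intro k hk
        obtain ⟨hu0, huD⟩ := hu k hk
        have e1 : (p i k - m k) * gseq p S t k * u k ≤ (p i k - m k) * gseq p S t k * D :=
          mul_le_mul_of_nonneg_left huD
            (mul_nonneg (by linarith [hmpi k]) (hc.g_nonneg t k))
        nlinarith [e1]
      have hsum2 : Summable ((Sᶜ).indicator
          (fun k => (p i k - m k) * gseq p S t k * D)) := by
        refine sumA i _ (fun k hk => ?_) (fun k hk => ?_)
        · exact mul_nonneg (mul_nonneg (by linarith [hmpi k]) (hc.g_nonneg t k)) hD0
        · have e1 : (p i k - m k) * gseq p S t k * D ≤ (p i k - m k) * gseq p S t k * 1 :=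
            mul_le_mul_of_nonneg_left hD1
              (mul_nonneg (by linarith [hmpi k]) (hc.g_nonneg t k))
          have e2 : (p i k - m k) * gseq p S t k ≤ (p i k - m k) * 1 :=
            mul_le_mul_of_nonneg_left (hc.g_le_one t k) (by linarith [hmpi k])
          have e3 := hm0 k
          linarith
      have h1 : U i ≤ ∑' k, (Sᶜ).indicator (fun k => m k * gseq p S t k * u k
          + (p i k - m k) * gseq p S t k * D) k := by
        refine Summable.tsum_le_tsum (ind_mono hterm) (hUsummable i) ?_
        have := ind_tsum_add hWsummable hsum2
        exact (hWsummable.add hsum2).congr fun k => by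
          by_cases hk : k ∈ Sᶜ
          · simp [Set.indicator_of_mem hk]
          · simp [Set.indicator_of_notMem hk]
      rw [ind_tsum_add hWsummable hsum2] at h1
      have h2 : ∑' k, (Sᶜ).indicator (fun k => (p i k - m k) * gseq p S t k * D) k
          = (∑' k, (Sᶜ).indicator (fun k => (p i k - m k) * gseq p S t k) k) * D := by
        exact ind_tsum_mul_const _ D
      have h3 : ∑' k, (Sᶜ).indicator (fun k => (p i k - m k) * gseq p S t k) k
          = gseq p S (t+1) i - V := by
        have h4 : ∀ k, (Sᶜ).indicator (fun k => p i k * gseq p S t k) k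
            = (Sᶜ).indicator (fun k => m k * gseq p S t k) k
              + (Sᶜ).indicator (fun k => (p i k - m k) * gseq p S t k) k := by
          intro k
          by_cases hk : k ∈ Sᶜ
          · rw [Set.indicator_of_mem hk, Set.indicator_of_mem hk, Set.indicator_of_mem hk]
            ring
          · rw [Set.indicator_of_notMem hk, Set.indicator_of_notMem hk,
              Set.indicator_of_notMem hk, add_zero]
        have hsum3 : Summable ((Sᶜ).indicator (fun k => (p i k - m k) * gseq p S t k)) := by
          refine sumA i _ (fun k hk => ?_) (fun k hk => ?_)
          · exact mul_nonneg (by linarith [hmpi k]) (hc.g_nonneg t k)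
          · have e2 : (p i k - m k) * gseq p S t k ≤ (p i k - m k) * 1 :=
              mul_le_mul_of_nonneg_left (hc.g_le_one t k) (by linarith [hmpi k])
            have e3 := hm0 k
            linarith
        have h5 : gseq p S (t+1) i = V + ∑' k,
            (Sᶜ).indicator (fun k => (p i k - m k) * gseq p S t k) k := by
          rw [gseq_succ, hVdef, ← Summable.tsum_add hVsummable hsum3]
          exact tsum_congr h4
        linarith
      rw [h2, h3] at h1
      linarith
    -- final combination
    rw [hrep i hi, hrep j hj]
    have hgoal : U i / gseq p S (t+1) i - U j / gseq p S (t+1) j ≤ gam δ ε * D := by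
      set gi := gseq p S (t+1) i
      set gj := gseq p S (t+1) j
      rw [div_sub_div _ _ (ne_of_gt hgi) (ne_of_gt hgj), div_le_iff₀ (mul_pos hgi hgj),
        show gam δ ε = 1 - (δ - ε)/3 from rfl]
      have hVi := hVlb i hi
      have hVj := hVlb j hj
      have hγD : gam δ ε = 1 - (δ - ε)/3 := rfl
      rcases le_total gi gj with hij | hij
      · have k1 : U i * gj ≤ (W + D * (gi - V)) * gj :=
          mul_le_mul_of_nonneg_right hUiW hgj.le
        have k2 : W * gi ≤ U j * gi := mul_le_mul_of_nonneg_right hWUj hgi.le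
        have k3 : W * (gj - gi) ≤ D * V * (gj - gi) :=
          mul_le_mul_of_nonneg_right hWDV (by linarith)
        have k4 : D * ((δ - ε)/3 * gj) * gi ≤ D * V * gi :=
          mul_le_mul_of_nonneg_right (mul_le_mul_of_nonneg_left hVj hD0) hgi.le
        nlinarith [k1, k2, k3, k4]
      · have k1 : U i * gj ≤ (W + D * (gi - V)) * gj :=
          mul_le_mul_of_nonneg_right hUiW hgj.le
        have k2 : W * gi ≤ U j * gi := mul_le_mul_of_nonneg_right hWUj hgi.le
        have k3 : W * gj ≤ W * gi := mul_le_mul_of_nonneg_left hij hW0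
        have k4 : D * ((δ - ε)/3 * gi) * gj ≤ D * V * gj :=
          mul_le_mul_of_nonneg_right (mul_le_mul_of_nonneg_left hVi hD0) hgj.le
        nlinarith [k1, k2, k3, k4]
    linarith [hgoal]
  · -- the step-closeness estimate
    intro i hi
    have hgi := hc.g_pos (t+1) hi
    have h1 := hrep i hi
    have h2 : 0 ≤ U i / gseq p S (t+1) i := div_nonneg (hU0 i) hgi.le
    have h3 : U i / gseq p S (t+1) i ≤ D := by
      rw [div_le_iff₀ hgi]; linarith [hUD i]
    have h4 := hμle i hi
    have h5 := hμub i hi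
    rw [abs_le]
    constructor <;> [skip; skip] <;> rw [h1] <;> linarith


theorem Ctx.main (hc : Ctx p S ε δ) : ∀ t,
    (∀ i ∈ Sᶜ, ∀ j ∈ Sᶜ, hseq p S t i - hseq p S t j ≤ ε * gam δ ε ^ t) ∧
    (∀ i ∈ Sᶜ, ∀ j ∈ Sᶜ, gseq p S t i ≤ Bprod δ ε t * gseq p S t j) := by
  intro t
  induction t with
  | zero =>
    constructor
    · intro i hi j hj
      have h1 := hc.h_le_one 0 hi
      have h2 := hc.h_lb 0 hj
      simpa using by linarith
    · intro i hi j hj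
      have h1 : gseq p S 0 i = 1 := rfl
      have h2 : gseq p S 0 j = 1 := rfl
      have h3 : Bprod δ ε 0 = 1 := rfl
      rw [h1, h2, h3, mul_one]
  | succ t ih =>
    obtain ⟨P, Q⟩ := ih
    have HQ3 : ∀ i ∈ Sᶜ, ∀ j ∈ Sᶜ, gseq p S t i ≤ 3 * gseq p S t j := by
      intro i hi j hj
      refine le_trans (Q i hi j hj) ?_
      exact mul_le_mul_of_nonneg_right (hc.B_le_three t) (hc.g_nonneg t j)
    have hdob := hc.dob t P HQ3
    constructor
    · intro i hi j hj
      have := hdob.1 i hi j hj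
      calc hseq p S (t+1) i - hseq p S (t+1) j ≤ gam δ ε * (ε * gam δ ε ^ t) := this
        _ = ε * gam δ ε ^ (t+1) := by ring
    · intro i hi j hj
      have h1ε : (0:ℝ) < 1 - ε := by have := hc.hε1; linarith
      have hγt0 : (0:ℝ) ≤ gam δ ε ^ t := pow_nonneg hc.gam_nonneg t
      have a1 : hseq p S t i ≤ hseq p S t j + ε * gam δ ε ^ t := by
        linarith [P i hi j hj]
      have a2 : hseq p S t j + ε * gam δ ε ^ t
          ≤ hseq p S t j * (1 + ε/(1-ε) * gam δ ε ^ t) := by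
        have hj1 := hc.h_lb t hj
        have hc0 : 0 ≤ ε/(1-ε) * gam δ ε ^ t :=
          mul_nonneg (div_nonneg hc.hε0 h1ε.le) hγt0
        have key : (1-ε) * (ε/(1-ε) * gam δ ε ^ t) = ε * gam δ ε ^ t := by
          field_simp
        nlinarith [mul_le_mul_of_nonneg_right hj1 hc0]
      have hBg0 : 0 ≤ Bprod δ ε t * gseq p S t j :=
        mul_nonneg (hc.B_nonneg t) (hc.g_nonneg t j)
      calc gseq p S (t+1) i = gseq p S t i * hseq p S t i := hc.g_succ_eq_mul t hi
        _ ≤ (Bprod δ ε t * gseq p S t j) * hseq p S t i :=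
            mul_le_mul_of_nonneg_right (Q i hi j hj) (hc.h_pos t hi).le
        _ ≤ (Bprod δ ε t * gseq p S t j) * (hseq p S t j * (1 + ε/(1-ε) * gam δ ε ^ t)) :=
            mul_le_mul_of_nonneg_left (le_trans a1 a2) hBg0
        _ = (Bprod δ ε t * (1 + ε/(1-ε) * gam δ ε ^ t)) * (gseq p S t j * hseq p S t j) := by
            ring
        _ = Bprod δ ε (t+1) * gseq p S (t+1) j := by
            rw [← hc.g_succ_eq_mul t hj]; rfl

theorem Ctx.ratio3 (hc : Ctx p S ε δ) (t : ℕ) :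
    ∀ i ∈ Sᶜ, ∀ j ∈ Sᶜ, gseq p S t i ≤ 3 * gseq p S t j := by
  intro i hi j hj
  refine le_trans ((hc.main t).2 i hi j hj) ?_
  exact mul_le_mul_of_nonneg_right (hc.B_le_three t) (hc.g_nonneg t j)

theorem Ctx.step_close (hc : Ctx p S ε δ) (t : ℕ) :
    ∀ i ∈ Sᶜ, |hseq p S (t+1) i - hseq p S t i| ≤ ε * gam δ ε ^ t :=
  (hc.dob t (hc.main t).1 (hc.ratio3 t)).2

theorem Ctx.exists_lam (hc : Ctx p S ε δ) :
    ∃ lam : ℝ, (1 - ε ≤ lam ∧ lam ≤ 1) ∧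
      ∀ t, ∀ i ∈ Sᶜ, |hseq p S t i - lam| ≤ 6*ε/(δ-ε) * gam δ ε ^ t := by
  obtain ⟨i₁, hi₁⟩ := hc.hAne
  set f : ℕ → ℝ := fun t => hseq p S t i₁ with hfdef
  have hstep : ∀ n, dist (f n) (f (n+1)) ≤ ε * gam δ ε ^ n := by
    intro n
    rw [Real.dist_eq, abs_sub_comm]
    exact hc.step_close n i₁ hi₁
  have hcauchy : CauchySeq f := cauchySeq_of_le_geometric (gam δ ε) ε hc.gam_lt_one hstep
  obtain ⟨lam, hlam⟩ := cauchySeq_tendsto_of_complete hcauchy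
  refine ⟨lam, ⟨?_, ?_⟩, ?_⟩
  · exact ge_of_tendsto hlam (Filter.Eventually.of_forall fun t => hc.h_lb t hi₁)
  · exact le_of_tendsto hlam (Filter.Eventually.of_forall fun t => hc.h_le_one t hi₁)
  · intro t i hi
    have hrate : dist (f t) lam ≤ ε * gam δ ε ^ t / (1 - gam δ ε) :=
      dist_le_of_le_geometric_of_tendsto (gam δ ε) ε hc.gam_lt_one hstep hlam t
    have hd3 : 1 - gam δ ε = (δ - ε)/3 := hc.one_sub_gam
    have hdpos := hc.hd_pos
    have h1 : |f t - lam| ≤ 3 * (ε * gam δ ε ^ t) / (δ - ε) := by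
      rw [← Real.dist_eq]
      calc dist (f t) lam ≤ ε * gam δ ε ^ t / (1 - gam δ ε) := hrate
        _ = 3 * (ε * gam δ ε ^ t) / (δ - ε) := by rw [hd3]; field_simp
    have h2 : |hseq p S t i - f t| ≤ ε * gam δ ε ^ t := by
      rw [abs_le]
      have hP := (hc.main t).1
      constructor
      · linarith [hP i₁ hi₁ i hi]
      · linarith [hP i hi i₁ hi₁]
    have hγt0 : (0:ℝ) ≤ gam δ ε ^ t := pow_nonneg hc.gam_nonneg t
    have h3 : ε * gam δ ε ^ t ≤ 3 * (ε * gam δ ε ^ t) / (δ - ε) := by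
      rw [le_div_iff₀ hdpos]
      have := hc.hd_le
      nlinarith [mul_nonneg hc.hε0 hγt0]
    have h4 : |hseq p S t i - lam| ≤ |hseq p S t i - f t| + |f t - lam| := by
      have := abs_sub_le (hseq p S t i) (f t) lam
      linarith
    have h5 : 3 * (ε * gam δ ε ^ t) / (δ - ε) + 3 * (ε * gam δ ε ^ t) / (δ - ε)
        = 6*ε/(δ-ε) * gam δ ε ^ t := by
      field_simp
      ring
    linarith


theorem Ctx.g_decay (hc : Ctx p S ε δ) (pi : ℕ → ℝ) (hpiPos : ∀ k, 0 < pi k)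
    (hpiSum : Summable pi) (hpiStat : ∀ k, HasSum (fun i => pi i * p i k) (pi k))
    (hirred : ∀ i j, ∃ n, 0 < matPow p n i j) {s₀ : ℕ} (hs₀ : s₀ ∈ S)
    {i₁ : ℕ} (hi₁ : i₁ ∈ Sᶜ) :
    ¬ (∀ t, 1/2 ≤ gseq p S t i₁) := by
  intro hbd
  have hanti : ∀ i, Antitone (fun t => gseq p S t i) :=
    fun i => antitone_nat_of_succ_le (fun t => hc.g_anti t i)
  have hbddb : ∀ i, BddBelow (Set.range fun t => gseq p S t i) := by
    intro i
    refine ⟨0, ?_⟩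
    rintro x ⟨t, rfl⟩
    exact hc.g_nonneg t i
  set G : ℕ → ℝ := fun i => ⨅ t, gseq p S t i with hGdef
  have hGtend : ∀ i, Tendsto (fun t => gseq p S t i) atTop (𝓝 (G i)) :=
    fun i => tendsto_atTop_ciInf (hanti i) (hbddb i)
  have hG0 : ∀ i, 0 ≤ G i := fun i => Real.iInf_nonneg (fun t => hc.g_nonneg t i)
  have hG1 : ∀ i, G i ≤ 1 := fun i => le_trans (ciInf_le (hbddb i) 0) (hc.g_le_one 0 i)
  set φ : ℕ → ℝ := fun k => (Sᶜ).indicator G k with hφdef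
  have hφ0 : ∀ k, 0 ≤ φ k := ind_nonneg (fun k _ => hG0 k)
  have hφ1 : ∀ k, φ k ≤ 1 := ind_le (fun k _ => hG1 k) (fun _ => zero_le_one)
  have hsumφ : ∀ i, Summable (fun k => p i k * φ k) :=
    fun i => Summable.of_nonneg_of_le (fun k => mul_nonneg (hc.hp0 i k) (hφ0 k))
      (fun k => by nlinarith [hc.hp0 i k, hφ0 k, hφ1 k]) (hc.psummable i)
  have hPφ01 : ∀ i, 0 ≤ ∑' k, p i k * φ k ∧ ∑' k, p i k * φ k ≤ 1 := by
    intro i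
    constructor
    · exact tsum_nonneg fun k => mul_nonneg (hc.hp0 i k) (hφ0 k)
    · calc ∑' k, p i k * φ k ≤ ∑' k, p i k :=
          Summable.tsum_le_tsum (fun k => by nlinarith [hc.hp0 i k, hφ0 k, hφ1 k])
            (hsumφ i) (hc.psummable i)
        _ = 1 := hc.psum i
  have hGrec : ∀ i, G i = ∑' k, p i k * φ k := by
    intro i
    have h1 : Tendsto (fun t => gseq p S (t+1) i) atTop (𝓝 (G i)) :=
      (hGtend i).comp (tendsto_add_atTop_nat 1)
    have h2 : Tendsto (fun t => ∑' k, (Sᶜ).indicator (fun k => p i k * gseq p S t k) k)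
        atTop (𝓝 (∑' k, p i k * φ k)) := by
      refine tendsto_tsum_of_dominated_convergence (hc.psummable i) (fun k => ?_)
        (Filter.Eventually.of_forall fun t k => ?_)
      · by_cases hk : k ∈ Sᶜ
        · have : ∀ t, (Sᶜ).indicator (fun k => p i k * gseq p S t k) k
              = p i k * gseq p S t k := fun t => Set.indicator_of_mem hk _
          simp only [this]
          have hφk : φ k = G k := Set.indicator_of_mem hk _
          rw [hφk]
          exact (hGtend k).const_mul _
        · have : ∀ t, (Sᶜ).indicator (fun k => p i k * gseq p S t k) k = 0 :=
            fun t => Set.indicator_of_notMem hk _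
          simp only [this]
          have hφk : φ k = 0 := Set.indicator_of_notMem hk _
          rw [hφk, mul_zero]
          exact tendsto_const_nhds
      · rw [Real.norm_eq_abs, abs_of_nonneg (ind_nonneg (hc.g_term_nonneg t i) k)]
        exact ind_le (hc.g_term_le t i) (hc.hp0 i) k
    exact tendsto_nhds_unique h1 h2
  have hsub : ∀ i, φ i ≤ ∑' k, p i k * φ k := by
    intro i
    by_cases hi : i ∈ Sᶜ
    · rw [hφdef]
      simp only [Set.indicator_of_mem hi]
      exact le_of_eq (hGrec i)
    · rw [hφdef]
      simp only [Set.indicator_of_notMem hi]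
      exact (hPφ01 i).1
  have hsum1 : Summable (fun i => pi i * φ i) :=
    Summable.of_nonneg_of_le (fun i => mul_nonneg (hpiPos i).le (hφ0 i))
      (fun i => by nlinarith [(hpiPos i).le, hφ0 i, hφ1 i]) hpiSum
  have hsum2 : Summable (fun i => pi i * ∑' k, p i k * φ k) :=
    Summable.of_nonneg_of_le (fun i => mul_nonneg (hpiPos i).le (hPφ01 i).1)
      (fun i => by nlinarith [(hpiPos i).le, (hPφ01 i).1, (hPφ01 i).2]) hpiSum
  have hFub : ∑' i, pi i * ∑' k, p i k * φ k = ∑' k, pi k * φ k := by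
    set F : ℕ → ℕ → ℝ := fun i k => pi i * p i k * φ k with hFdef
    have hFnn : ∀ q : ℕ × ℕ, 0 ≤ Function.uncurry F q := by
      rintro ⟨i, k⟩
      exact mul_nonneg (mul_nonneg (hpiPos i).le (hc.hp0 i k)) (hφ0 k)
    have hFrow : ∀ i, Summable (F i) := by
      intro i
      have := (hsumφ i).mul_left (pi i)
      refine this.congr fun k => ?_
      rw [hFdef]; ring
    have hFrowsum : ∀ i, ∑' k, F i k = pi i * ∑' k, p i k * φ k := by
      intro i
      rw [← tsum_mul_left]
      exact tsum_congr fun k => by rw [hFdef]; ring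
    have hFsum : Summable (Function.uncurry F) := by
      refine (summable_prod_of_nonneg hFnn).2 ⟨fun i => hFrow i, ?_⟩
      refine Summable.of_nonneg_of_le (fun i => ?_) (fun i => ?_) hpiSum
      · exact tsum_nonneg fun k => hFnn (i, k)
      · calc ∑' (y : ℕ), Function.uncurry F (i, y) = ∑' k, F i k := rfl
          _ = pi i * ∑' k, p i k * φ k := hFrowsum i
          _ ≤ pi i := by nlinarith [(hpiPos i).le, (hPφ01 i).1, (hPφ01 i).2]
    have hcomm : ∑' k, ∑' i, F i k = ∑' i, ∑' k, F i k := Summable.tsum_comm hFsum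
    have hcol : ∀ k, ∑' i, F i k = pi k * φ k := by
      intro k
      have h1 : ∑' i, F i k = (∑' i, pi i * p i k) * φ k := by
        rw [← tsum_mul_right]
      rw [h1, (hpiStat k).tsum_eq]
    calc ∑' i, pi i * ∑' k, p i k * φ k = ∑' i, ∑' k, F i k := by
          exact tsum_congr fun i => (hFrowsum i).symm
      _ = ∑' k, ∑' i, F i k := hcomm.symm
      _ = ∑' k, pi k * φ k := tsum_congr hcol
  have heq : ∀ i, φ i = ∑' k, p i k * φ k := by
    by_contra hcon
    push_neg at hcon
    obtain ⟨i₀, hi₀⟩ := hcon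
    have hlt : φ i₀ < ∑' k, p i₀ k * φ k := lt_of_le_of_ne (hsub i₀) hi₀
    have : ∑' i, pi i * φ i < ∑' i, pi i * ∑' k, p i k * φ k :=
      Summable.tsum_lt_tsum (fun i => mul_le_mul_of_nonneg_left (hsub i) (hpiPos i).le)
        (mul_lt_mul_of_pos_left hlt (hpiPos i₀)) hsum1 hsum2
    rw [hFub] at this
    exact lt_irrefl _ this
  have hzero : ∀ m k, 0 < matPow p m s₀ k → φ k = 0 := by
    intro m
    induction m with
    | zero =>
      intro k hk
      simp only [matPow] at hk
      split at hk
      · rename_i hks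
        rw [hφdef, ← hks]
        exact Set.indicator_of_notMem (by simp [hs₀]) _
      · exact absurd hk (by norm_num)
    | succ m ih =>
      intro k hk
      have hex : ∃ l, 0 < matPow p m s₀ l * p l k := by
        by_contra hno
        push_neg at hno
        have : matPow p (m+1) s₀ k ≤ 0 := tsum_nonpos hno
        linarith [hk]
      obtain ⟨l, hl⟩ := hex
      have hpos : 0 < matPow p m s₀ l ∧ 0 < p l k := by
        rcases mul_pos_iff.mp hl with ⟨h1, h2⟩ | ⟨h1, h2⟩
        · exact ⟨h1, h2⟩
        · exact absurd h1 (not_lt.mpr (matPow_nonneg hc.hp0 m s₀ l))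
      have hφl : φ l = 0 := ih l hpos.1
      have hterm : p l k * φ k ≤ 0 := by
        have h1 := Summable.le_tsum (hsumφ l) k (fun j _ => mul_nonneg (hc.hp0 l j) (hφ0 j))
        rw [← heq l, hφl] at h1
        exact h1
      have := mul_nonneg (hc.hp0 l k) (hφ0 k)
      nlinarith [hpos.2, hφ0 k]
  obtain ⟨n, hn⟩ := hirred s₀ i₁
  have hφi₁ : φ i₁ = 0 := hzero n i₁ hn
  have hGi₁ : G i₁ = 0 := by
    rw [hφdef] at hφi₁
    simpa [Set.indicator_of_mem hi₁] using hφi₁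
  have : (1:ℝ)/2 ≤ G i₁ := le_ciInf fun t => hbd t
  rw [hGi₁] at this
  norm_num at this


theorem Ctx.K_bounds (hc : Ctx p S ε δ) :
    0 ≤ 36*ε/(δ-ε)^2 ∧ 36*ε/(δ-ε)^2 ≤ 2/5 := by
  have hd := hc.hd_pos
  have hd2 : (0:ℝ) < (δ-ε)^2 := by positivity
  constructor
  · exact div_nonneg (by linarith [hc.hε0]) (sq_nonneg _)
  · rw [div_le_iff₀ hd2]
    have h2 : (99/100*δ)^2 ≤ (δ-ε)^2 := by nlinarith [hc.hd_lb, hc.hd_pos, hc.hδpos]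
    nlinarith [hc.hεδ, hc.hδpos]

theorem Ctx.lam_lt_one (hc : Ctx p S ε δ) (pi : ℕ → ℝ) (hpiPos : ∀ k, 0 < pi k)
    (hpiSum : Summable pi) (hpiStat : ∀ k, HasSum (fun i => pi i * p i k) (pi k))
    (hirred : ∀ i j, ∃ n, 0 < matPow p n i j) {s₀ : ℕ} (hs₀ : s₀ ∈ S)
    {lam : ℝ}
    (hrate : ∀ t, ∀ i ∈ Sᶜ, |hseq p S t i - lam| ≤ 6*ε/(δ-ε) * gam δ ε ^ t) :
    lam < 1 := by
  by_contra hge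
  push_neg at hge
  obtain ⟨i₁, hi₁⟩ := hc.hAne
  have hd := hc.hd_pos
  have hγ0 := hc.gam_nonneg
  have hγ1 := hc.gam_lt_one.le
  have hE0 : ∀ t, (0:ℝ) ≤ 6*ε/(δ-ε) * gam δ ε ^ t := fun t =>
    mul_nonneg (div_nonneg (by linarith [hc.hε0]) hd.le) (pow_nonneg hγ0 t)
  have hlow : ∀ t, 1 - 6*ε/(δ-ε) * gam δ ε ^ t ≤ hseq p S t i₁ := by
    intro t
    have h1 := hrate t i₁ hi₁
    rw [abs_le] at h1
    linarith [h1.1]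
  have hKhalf : 18*ε/(δ-ε)^2 ≤ 1/5 := by
    have h36 : 36*ε/(δ-ε)^2 = 2*(18*ε/(δ-ε)^2) := by ring
    linarith [hc.K_bounds.2]
  have hK0 : (0:ℝ) ≤ 18*ε/(δ-ε)^2 := div_nonneg (by linarith [hc.hε0]) (sq_nonneg _)
  have hglb : ∀ t, 1 - 18*ε/(δ-ε)^2 * (1 - gam δ ε ^ t) ≤ gseq p S t i₁ := by
    intro t
    induction t with
    | zero => simp [gseq]
    | succ t ih =>
      have hσt0 : (0:ℝ) ≤ 18*ε/(δ-ε)^2 * (1 - gam δ ε ^ t) :=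
        mul_nonneg hK0 (by nlinarith [hc.gam_pow_le_one t])
      have hσtK : 18*ε/(δ-ε)^2 * (1 - gam δ ε ^ t) ≤ 1/5 := by
        have h1 : (1:ℝ) - gam δ ε ^ t ≤ 1 := by nlinarith [pow_nonneg hγ0 t]
        nlinarith [hK0]
      have hEt : 6*ε/(δ-ε) * gam δ ε ^ t ≤ 1/2 := by
        have h1 : 6*ε/(δ-ε) ≤ 1/2 := by
          rw [div_le_iff₀ hd]
          have := hc.hεδ'
          have := hc.hd_lb
          nlinarith [hc.hδpos, hc.hδ1]
        have h2 : 6*ε/(δ-ε) * gam δ ε ^ t ≤ 6*ε/(δ-ε) * 1 :=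
          mul_le_mul_of_nonneg_left (hc.gam_pow_le_one t)
            (div_nonneg (by linarith [hc.hε0]) hd.le)
        linarith
      have hstep : 1 - 18*ε/(δ-ε)^2 * (1 - gam δ ε ^ (t+1))
          = 1 - 18*ε/(δ-ε)^2 * (1 - gam δ ε ^ t) - 6*ε/(δ-ε) * gam δ ε ^ t := by
        have hd' : (δ - ε) ≠ 0 := ne_of_gt hd
        have hpow : gam δ ε ^ (t+1) = gam δ ε * gam δ ε ^ t := by ring
        rw [hpow, show gam δ ε = 1 - (δ-ε)/3 from rfl]
        field_simp
        ring
      rw [hstep]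
      have hmul : (1 - 18*ε/(δ-ε)^2 * (1 - gam δ ε ^ t)) * (1 - 6*ε/(δ-ε) * gam δ ε ^ t)
          ≤ gseq p S (t+1) i₁ := by
        rw [hc.g_succ_eq_mul t hi₁]
        exact mul_le_mul ih (hlow t) (by linarith [hEt]) (hc.g_nonneg t i₁)
      nlinarith [mul_nonneg hσt0 (hE0 t), hmul]
  have hhalf : ∀ t, 1/2 ≤ gseq p S t i₁ := by
    intro t
    have h1 := hglb t
    have h2 : 18*ε/(δ-ε)^2 * (1 - gam δ ε ^ t) ≤ 1/5 := by
      have h3 : (1:ℝ) - gam δ ε ^ t ≤ 1 := by nlinarith [pow_nonneg hγ0 t]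
      nlinarith [hK0]
    linarith
  exact hc.g_decay pi hpiPos hpiSum hpiStat hirred hs₀ hi₁ hhalf


theorem Ctx.exists_eigen (hc : Ctx p S ε δ) (pi : ℕ → ℝ) (hpiPos : ∀ k, 0 < pi k)
    (hpiSum : Summable pi) (hpiStat : ∀ k, HasSum (fun i => pi i * p i k) (pi k))
    (hirred : ∀ i j, ∃ n, 0 < matPow p n i j) {s₀ : ℕ} (hs₀ : s₀ ∈ S) :
    ∃ lam : ℝ, ∃ f : ℕ → ℝ, (1 - ε ≤ lam ∧ lam < 1) ∧
      (∀ i ∈ Sᶜ, ∑' k, (Sᶜ).indicator (fun k => p i k * f k) k = lam * f i) ∧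
      (∀ i ∈ Sᶜ, 1 ≤ f i ∧ f i ≤ 1/(1 - Cinf δ ε)) := by
  obtain ⟨lam, ⟨hlam1, hlam2⟩, hrate⟩ := hc.exists_lam
  have hlamlt : lam < 1 := hc.lam_lt_one pi hpiPos hpiSum hpiStat hirred hs₀ hrate
  have hε1 := hc.hε1
  have hd := hc.hd_pos
  have hγ0 := hc.gam_nonneg
  have hlampos : (0:ℝ) < lam := by linarith
  have hlamhalf : (1:ℝ)/2 ≤ lam := by linarith
  have hK0 : (0:ℝ) ≤ 36*ε/(δ-ε)^2 := hc.K_bounds.1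
  have hK : 36*ε/(δ-ε)^2 ≤ 2/5 := hc.K_bounds.2
  have hE'0 : ∀ t, (0:ℝ) ≤ 12*ε/(δ-ε) * gam δ ε ^ t := fun t =>
    mul_nonneg (div_nonneg (by linarith [hc.hε0]) hd.le) (pow_nonneg hγ0 t)
  have hσb : ∀ t, (0:ℝ) ≤ 36*ε/(δ-ε)^2 * (1 - gam δ ε ^ t) ∧
      36*ε/(δ-ε)^2 * (1 - gam δ ε ^ t) ≤ 36*ε/(δ-ε)^2 := by
    intro t
    have h1 : (0:ℝ) ≤ 1 - gam δ ε ^ t := by linarith [hc.gam_pow_le_one t]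
    have h2 : (1:ℝ) - gam δ ε ^ t ≤ 1 := by linarith [pow_nonneg hγ0 t]
    exact ⟨mul_nonneg hK0 h1, mul_le_of_le_one_right hK0 h2⟩
  have hσstep : ∀ t, 36*ε/(δ-ε)^2 * (1 - gam δ ε ^ (t+1))
      = 36*ε/(δ-ε)^2 * (1 - gam δ ε ^ t) + 12*ε/(δ-ε) * gam δ ε ^ t := by
    intro t
    have hd' : (δ - ε) ≠ 0 := ne_of_gt hd
    have hpow : gam δ ε ^ (t+1) = gam δ ε * gam δ ε ^ t := by ring
    rw [hpow, show gam δ ε = 1 - (δ-ε)/3 from rfl]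
    field_simp
    ring
  have hq : ∀ t, ∀ i ∈ Sᶜ, |hseq p S t i / lam - 1| ≤ 12*ε/(δ-ε) * gam δ ε ^ t := by
    intro t i hi
    have h1 := hrate t i hi
    have h2 : hseq p S t i / lam - 1 = (hseq p S t i - lam)/lam := by field_simp
    rw [h2, abs_div, abs_of_pos hlampos, div_le_iff₀ hlampos]
    have h3 : 6*ε/(δ-ε) * gam δ ε ^ t = (12*ε/(δ-ε) * gam δ ε ^ t) * (1/2) := by ring
    have h4 := mul_le_mul_of_nonneg_left hlamhalf (hE'0 t)
    linarith
  set F : ℕ → ℕ → ℝ := fun t i => gseq p S t i / lam ^ t with hFdef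
  have hF0' : ∀ t, ∀ i, 0 ≤ F t i := fun t i =>
    div_nonneg (hc.g_nonneg t i) (pow_nonneg hlampos.le t)
  have hFrec : ∀ t, ∀ i ∈ Sᶜ, F (t+1) i = F t i * (hseq p S t i / lam) := by
    intro t i hi
    simp only [hFdef]
    rw [hc.g_succ_eq_mul t hi, pow_succ]
    field_simp
    try ring
  have hFbounds : ∀ t, ∀ i ∈ Sᶜ,
      1 - 36*ε/(δ-ε)^2 * (1 - gam δ ε ^ t) ≤ F t i ∧
      F t i ≤ 1/(1 - 36*ε/(δ-ε)^2 * (1 - gam δ ε ^ t)) := by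
    intro t
    induction t with
    | zero =>
      intro i hi
      have h0 : F 0 i = 1 := by
        simp only [hFdef]
        have : gseq p S 0 i = 1 := rfl
        rw [this, pow_zero, div_one]
      rw [h0]
      norm_num
    | succ t ih =>
      intro i hi
      obtain ⟨ihl, ihu⟩ := ih i hi
      obtain ⟨hσt0, hσtK⟩ := hσb t
      obtain ⟨hσt0', hσtK'⟩ := hσb (t+1)
      have hσt1 : (0:ℝ) < 1 - 36*ε/(δ-ε)^2 * (1 - gam δ ε ^ t) := by linarith
      have hσt1' : (0:ℝ) < 1 - 36*ε/(δ-ε)^2 * (1 - gam δ ε ^ (t+1)) := by linarith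
      have hqt := hq t i hi
      rw [abs_le] at hqt
      have hquot0 : 0 ≤ hseq p S t i / lam := div_nonneg (hc.h_pos t hi).le hlampos.le
      rw [hFrec t i hi]
      constructor
      · have hlow1 : 1 - 12*ε/(δ-ε) * gam δ ε ^ t ≤ hseq p S t i / lam := by
          linarith [hqt.1]
        have hE'le : 12*ε/(δ-ε) * gam δ ε ^ t ≤ 36*ε/(δ-ε)^2 * (1 - gam δ ε ^ (t+1))
            - 36*ε/(δ-ε)^2 * (1 - gam δ ε ^ t) := by rw [hσstep t]; linarith
        have hE'1 : 12*ε/(δ-ε) * gam δ ε ^ t ≤ 1 := by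
          have := hσstep t
          nlinarith [hσt0, hσtK', hσt0']
        have hmul := mul_le_mul ihl hlow1 (by linarith)
          (le_trans (by linarith) ihl)
        rw [hσstep t]
        nlinarith [mul_nonneg hσt0 (hE'0 t), hmul]
      · have hup1 : hseq p S t i / lam ≤ 1 + 12*ε/(δ-ε) * gam δ ε ^ t := by
          linarith [hqt.2]
        have h1 : F t i * (hseq p S t i / lam)
            ≤ (1/(1 - 36*ε/(δ-ε)^2 * (1 - gam δ ε ^ t))) * (1 + 12*ε/(δ-ε) * gam δ ε ^ t) :=
          mul_le_mul ihu hup1 hquot0 (by positivity)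
        refine le_trans h1 ?_
        rw [div_mul_eq_mul_div, div_le_div_iff₀ hσt1 hσt1', hσstep t]
        nlinarith [mul_nonneg hσt0 (hE'0 t), mul_nonneg (hE'0 t) (hE'0 t)]
  have hFub53 : ∀ t, ∀ i ∈ Sᶜ, F t i ≤ 5/3 := by
    intro t i hi
    refine le_trans (hFbounds t i hi).2 ?_
    obtain ⟨h1, h2⟩ := hσb t
    rw [div_le_iff₀ (by linarith)]
    nlinarith
  have hFcauchy : ∀ i ∈ Sᶜ, CauchySeq (fun t => F t i) := by
    intro i hi
    apply cauchySeq_of_le_geometric (gam δ ε) (24*ε/(δ-ε)) hc.gam_lt_one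
    intro t
    rw [Real.dist_eq, hFrec t i hi]
    have hqt := hq t i hi
    have hF0 := hF0' t i
    have hFub := hFub53 t i hi
    have heq1 : F t i - F t i * (hseq p S t i / lam)
        = F t i * -(hseq p S t i / lam - 1) := by ring
    rw [heq1, abs_mul, abs_neg, abs_of_nonneg hF0]
    have h2 : F t i * |hseq p S t i / lam - 1| ≤ (5/3) * (12*ε/(δ-ε) * gam δ ε ^ t) :=
      mul_le_mul hFub hqt (abs_nonneg _) (by norm_num)
    have h3 : 24*ε/(δ-ε) * gam δ ε ^ t = 2 * (12*ε/(δ-ε) * gam δ ε ^ t) := by ring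
    linarith [hE'0 t]
  have hFlim : ∀ i, ∃ L, (i ∈ Sᶜ → Tendsto (fun t => F t i) atTop (𝓝 L)) := by
    intro i
    by_cases hi : i ∈ Sᶜ
    · obtain ⟨L, hL⟩ := cauchySeq_tendsto_of_complete (hFcauchy i hi)
      exact ⟨L, fun _ => hL⟩
    · exact ⟨1, fun h => absurd h hi⟩
  choose f0 hf0 using hFlim
  have hf0lb : ∀ i ∈ Sᶜ, 1 - 36*ε/(δ-ε)^2 ≤ f0 i := by
    intro i hi
    refine ge_of_tendsto (hf0 i hi) (Filter.Eventually.of_forall fun t => ?_)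
    have h1 := (hFbounds t i hi).1
    have h2 := (hσb t).2
    linarith
  have hBpos : (0:ℝ) < 1 - Cinf δ ε := by linarith [hc.Cinf_le]
  have hratio : ∀ i ∈ Sᶜ, ∀ j ∈ Sᶜ, f0 i ≤ (1/(1 - Cinf δ ε)) * f0 j := by
    intro i hi j hj
    refine le_of_tendsto_of_tendsto' (hf0 i hi) ((hf0 j hj).const_mul _) (fun t => ?_)
    have h2 := (hc.main t).2 i hi j hj
    have h3 : gseq p S t i / lam^t ≤ (Bprod δ ε t * gseq p S t j)/lam^t :=
      (div_le_div_iff_of_pos_right (pow_pos hlampos t)).mpr h2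
    have h4 : (Bprod δ ε t * gseq p S t j)/lam^t = Bprod δ ε t * F t j := by
      simp only [hFdef]
      ring
    have h5 : Bprod δ ε t * F t j ≤ (1/(1 - Cinf δ ε)) * F t j :=
      mul_le_mul_of_nonneg_right (hc.B_le' t) (hF0' t j)
    calc F t i = gseq p S t i / lam^t := by simp only [hFdef]
      _ ≤ (Bprod δ ε t * gseq p S t j)/lam^t := h3
      _ = Bprod δ ε t * F t j := h4
      _ ≤ (1/(1 - Cinf δ ε)) * F t j := h5
  have heig0 : ∀ i ∈ Sᶜ, ∑' k, (Sᶜ).indicator (fun k => p i k * f0 k) k = lam * f0 i := by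
    intro i hi
    have hQF : ∀ t, ∑' k, (Sᶜ).indicator (fun k => p i k * F t k) k = lam * F (t+1) i := by
      intro t
      have h1 : ∀ k, (Sᶜ).indicator (fun k => p i k * F t k) k
          = (Sᶜ).indicator (fun k => p i k * gseq p S t k) k / lam ^ t := by
        intro k
        by_cases hk : k ∈ Sᶜ
        · rw [Set.indicator_of_mem hk, Set.indicator_of_mem hk]
          simp only [hFdef]
          ring
        · rw [Set.indicator_of_notMem hk, Set.indicator_of_notMem hk, zero_div]
      calc ∑' k, (Sᶜ).indicator (fun k => p i k * F t k) k
          = ∑' k, (Sᶜ).indicator (fun k => p i k * gseq p S t k) k / lam ^ t :=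
            tsum_congr h1
        _ = (∑' k, (Sᶜ).indicator (fun k => p i k * gseq p S t k) k) / lam ^ t :=
            tsum_div_const
        _ = gseq p S (t+1) i / lam ^ t := by rw [← gseq_succ]
        _ = lam * F (t+1) i := by
            simp only [hFdef]
            rw [pow_succ]
            field_simp
    have hLHS : Tendsto (fun t => ∑' k, (Sᶜ).indicator (fun k => p i k * F t k) k) atTop
        (𝓝 (∑' k, (Sᶜ).indicator (fun k => p i k * f0 k) k)) := by
      refine tendsto_tsum_of_dominated_convergence (bound := fun k => p i k * 2)
        ((hc.psummable i).mul_right 2) (fun k => ?_) (Filter.Eventually.of_forall fun t k => ?_)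
      · by_cases hk : k ∈ Sᶜ
        · simp only [Set.indicator_of_mem hk]
          exact ((hf0 k hk).const_mul _)
        · simp only [Set.indicator_of_notMem hk]
          exact tendsto_const_nhds
      · by_cases hk : k ∈ Sᶜ
        · rw [Set.indicator_of_mem hk, Real.norm_eq_abs,
            abs_of_nonneg (mul_nonneg (hc.hp0 i k) (hF0' t k))]
          show p i k * F t k ≤ p i k * 2
          exact mul_le_mul_of_nonneg_left (le_trans (hFub53 t k hk) (by norm_num))
            (hc.hp0 i k)
        · rw [Set.indicator_of_notMem hk]
          simpa using mul_nonneg (hc.hp0 i k) (by norm_num : (0:ℝ) ≤ 2)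
    simp only [hQF] at hLHS
    have hRHS : Tendsto (fun t => lam * F (t+1) i) atTop (𝓝 (lam * f0 i)) :=
      ((hf0 i hi).comp (tendsto_add_atTop_nat 1)).const_mul lam
    exact tendsto_nhds_unique hLHS hRHS
  haveI : Nonempty ↥(Sᶜ) := hc.hAne.to_subtype
  have hbddf : BddBelow (Set.range fun j : ↥(Sᶜ) => f0 j) := by
    refine ⟨1 - 36*ε/(δ-ε)^2, ?_⟩
    rintro x ⟨j, rfl⟩
    exact hf0lb j j.2
  set fmin := ⨅ j : ↥(Sᶜ), f0 j with hfmindef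
  have hfminlb : 1 - 36*ε/(δ-ε)^2 ≤ fmin := le_ciInf fun j => hf0lb j j.2
  have hfminpos : 0 < fmin := by nlinarith
  have hfminle : ∀ j ∈ Sᶜ, fmin ≤ f0 j := fun j hj => ciInf_le hbddf ⟨j, hj⟩
  have hfub2 : ∀ i ∈ Sᶜ, f0 i ≤ (1/(1 - Cinf δ ε)) * fmin := by
    intro i hi
    have h0 : (0:ℝ) < 1/(1 - Cinf δ ε) := by positivity
    have h1 : f0 i / (1/(1 - Cinf δ ε)) ≤ fmin := by
      refine le_ciInf fun j => ?_
      rw [div_le_iff₀ h0]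
      have h2 := hratio i hi j j.2
      nlinarith
    calc f0 i = f0 i / (1/(1 - Cinf δ ε)) * (1/(1 - Cinf δ ε)) := by field_simp
      _ ≤ fmin * (1/(1 - Cinf δ ε)) := mul_le_mul_of_nonneg_right h1 h0.le
      _ = (1/(1 - Cinf δ ε)) * fmin := mul_comm _ _
  refine ⟨lam, fun i => f0 i / fmin, ⟨hlam1, hlamlt⟩, ?_, ?_⟩
  · intro i hi
    have h1 : ∀ k, (Sᶜ).indicator (fun k => p i k * (f0 k / fmin)) k
        = (Sᶜ).indicator (fun k => p i k * f0 k) k / fmin := by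
      intro k
      by_cases hk : k ∈ Sᶜ
      · rw [Set.indicator_of_mem hk, Set.indicator_of_mem hk]
        ring
      · rw [Set.indicator_of_notMem hk, Set.indicator_of_notMem hk, zero_div]
    calc ∑' k, (Sᶜ).indicator (fun k => p i k * (f0 k / fmin)) k
        = ∑' k, (Sᶜ).indicator (fun k => p i k * f0 k) k / fmin := tsum_congr h1
      _ = (∑' k, (Sᶜ).indicator (fun k => p i k * f0 k) k) / fmin := tsum_div_const
      _ = (lam * f0 i) / fmin := by rw [heig0 i hi]
      _ = lam * (f0 i / fmin) := by ring
  · intro i hi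
    constructor
    · exact (one_le_div hfminpos).mpr (hfminle i hi)
    · rw [div_le_iff₀ hfminpos]
      exact hfub2 i hi

end TemEig

/-- (Lemma 3.2) For a t.e.m. chain and rare nonempty sets `S_n`, for all `n` large enough the
substochastic matrix `P_n = (p(i,k))_{i,k ∈ S_nᶜ}` has an eigenvalue `λ_n ∈ [1 − ε_n, 1)`
with an eigenvector `f_n` satisfying `1 ≤ f_n(i) ≤ 1/(1 − (6/δ₀) ε_n)` on `S_nᶜ`. -/
theorem tem_chain_principal_eigenvalue
    (p : ℕ → ℕ → ℝ) (pi : ℕ → ℝ) (P : ℕ → Measure (ℕ → ℕ))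
    (hchain : IsErgodicChain p pi) (hlaw : IsChainLaw p P)
    (htight : TightChain p) (hmix : 0 < delta0 p)
    (S : ℕ → Set ℕ) (hne : ∀ n, (S n).Nonempty)
    (hrare : Tendsto (fun n => setMass pi (S n)) atTop (nhds 0)) :
    ∃ n₀ : ℕ, ∀ n ≥ n₀, ∃ lam : ℝ, ∃ f : ℕ → ℝ,
      (1 - epsSup p (S n) ≤ lam ∧ lam < 1) ∧
      (∀ i ∉ S n, ∑' k, ((S n)ᶜ).indicator (fun k => p i k * f k) k = lam * f i) ∧
      (∀ i ∉ S n, 1 ≤ f i ∧ f i ≤ 1 / (1 - (6 / delta0 p) * epsSup p (S n))) := by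
  have hp0 := hchain.nonneg
  have hpsummable : ∀ i, Summable (p i) := fun i => (hchain.rowSum i).summable
  have hpsum : ∀ i, ∑' k, p i k = 1 := fun i => (hchain.rowSum i).tsum_eq
  have hple1 : ∀ i k, p i k ≤ 1 := by
    intro i k
    have := Summable.le_tsum (hpsummable i) k (fun j _ => hp0 i j)
    rwa [hpsum i] at this
  -- δ facts
  have hrow_nonneg : ∀ i j, (0:ℝ) ≤ ∑' k, p i k * p j k := fun i j =>
    tsum_nonneg fun k => mul_nonneg (hp0 i k) (hp0 j k)
  have hinner_bdd : ∀ i, BddBelow (Set.range fun j => ∑' k, p i k * p j k) := by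
    intro i
    exact ⟨0, by rintro x ⟨j, rfl⟩; exact hrow_nonneg i j⟩
  have houter_bdd : BddBelow (Set.range fun i => ⨅ j, ∑' k, p i k * p j k) := by
    refine ⟨0, ?_⟩
    rintro x ⟨i, rfl⟩
    exact Real.iInf_nonneg (fun j => hrow_nonneg i j)
  have hδle : ∀ i j, delta0 p ≤ ∑' k, p i k * p j k := fun i j =>
    le_trans (ciInf_le houter_bdd i) (ciInf_le (hinner_bdd i) j)
  have hδ1 : delta0 p ≤ 1 := by
    refine le_trans (hδle 0 0) ?_
    calc ∑' k, p 0 k * p 0 k ≤ ∑' k, p 0 k := by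
          refine Summable.tsum_le_tsum (fun k => ?_) ?_ (hpsummable 0)
          · nlinarith [hp0 0 k, hple1 0 k]
          · exact Summable.of_nonneg_of_le (fun k => mul_nonneg (hp0 0 k) (hp0 0 k))
              (fun k => by nlinarith [hp0 0 k, hple1 0 k]) (hpsummable 0)
      _ = 1 := hpsum 0
  have hη : (0:ℝ) < delta0 p ^ 2 / 100 := by positivity
  -- choose N₀ from tightness
  have h1 : ∀ᶠ N in atTop,
      (⨆ i, ∑' k, {k : ℕ | N < k}.indicator (p i) k) < delta0 p ^ 2 / 100 :=
    htight.eventually_lt_const hη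
  obtain ⟨N₀, hN₀⟩ := h1.exists
  -- choose n₀ from rareness
  have hm : (0:ℝ) < (Finset.range (N₀+1)).inf' (by simp) pi := by
    rw [Finset.lt_inf'_iff]
    exact fun k _ => hchain.piPos k
  have h2 : ∀ᶠ n in atTop, setMass pi (S n) < (Finset.range (N₀+1)).inf' (by simp) pi :=
    hrare.eventually_lt_const hm
  rw [Filter.eventually_atTop] at h2
  obtain ⟨n₀, hn₀⟩ := h2
  refine ⟨n₀, fun n hn => ?_⟩
  -- S n avoids [0, N₀]
  have hSsub : S n ⊆ {k : ℕ | N₀ < k} := by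
    intro k hk
    by_contra hkN
    simp only [Set.mem_setOf_eq, not_lt] at hkN
    have hkN' : k ∈ Finset.range (N₀+1) := by
      simp only [Finset.mem_range]
      omega
    have hk1 : (Finset.range (N₀+1)).inf' (by simp) pi ≤ pi k := Finset.inf'_le _ hkN'
    have hk2 : pi k ≤ setMass pi (S n) := by
      have h3 := Summable.le_tsum ((hchain.piSum.summable).indicator (S n)) k
        (fun j _ => TemEig.ind_nonneg (fun l _ => (hchain.piPos l).le) j)
      rwa [Set.indicator_of_mem hk] at h3
    have := hn₀ n hn
    linarith
  have h0A : (0:ℕ) ∈ (S n)ᶜ := fun h0 => by simpa using hSsub h0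
  have hAne : ((S n)ᶜ).Nonempty := ⟨0, h0A⟩
  haveI : Nonempty ↥((S n)ᶜ) := hAne.to_subtype
  -- ε facts
  have hbddS : ∀ (B : Set ℕ), BddAbove (Set.range fun i : ℕ => ∑' k, B.indicator (p i) k) := by
    intro B
    refine ⟨1, ?_⟩
    rintro x ⟨i, rfl⟩
    calc ∑' k, B.indicator (p i) k ≤ ∑' k, p i k :=
        TemEig.ind_tsum_le_tsum (fun k _ => le_refl _) (fun k _ => hp0 i k)
          (hp0 i) (hpsummable i)
      _ = 1 := hpsum i
  have hbddA : BddAbove (Set.range fun i : ↥((S n)ᶜ) => ∑' k, (S n).indicator (p (i:ℕ)) k) := by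
    refine ⟨1, ?_⟩
    rintro x ⟨i, rfl⟩
    calc ∑' k, (S n).indicator (p (i:ℕ)) k ≤ ∑' k, p (i:ℕ) k :=
        TemEig.ind_tsum_le_tsum (fun k _ => le_refl _) (fun k _ => hp0 _ k)
          (hp0 _) (hpsummable _)
      _ = 1 := hpsum _
  have hεS : ∀ i ∈ (S n)ᶜ, (∑' k, (S n).indicator (p i) k) ≤ epsSup p (S n) :=
    fun i hi => le_ciSup hbddA (⟨i, hi⟩ : ↥((S n)ᶜ))
  have hε0 : 0 ≤ epsSup p (S n) :=
    le_trans (tsum_nonneg (TemEig.ind_nonneg fun k _ => hp0 0 k)) (hεS 0 h0A)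
  have hεη : epsSup p (S n) ≤ delta0 p ^ 2 / 100 := by
    refine ciSup_le fun i => ?_
    have hterm : ∀ k, (S n).indicator (p (i:ℕ)) k ≤ {k : ℕ | N₀ < k}.indicator (p (i:ℕ)) k := by
      intro k
      by_cases hk : k ∈ S n
      · rw [Set.indicator_of_mem hk, Set.indicator_of_mem (hSsub hk)]
      · rw [Set.indicator_of_notMem hk]
        exact TemEig.ind_nonneg (fun l _ => hp0 _ l) k
    calc ∑' k, (S n).indicator (p (i:ℕ)) k
        ≤ ∑' k, {k : ℕ | N₀ < k}.indicator (p (i:ℕ)) k :=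
          Summable.tsum_le_tsum hterm ((hpsummable _).indicator _) ((hpsummable _).indicator _)
      _ ≤ ⨆ i, ∑' k, {k : ℕ | N₀ < k}.indicator (p i) k := le_ciSup (hbddS _) (i:ℕ)
      _ ≤ delta0 p ^ 2 / 100 := hN₀.le
  -- build the context and conclude
  have hc : TemEig.Ctx p (S n) (epsSup p (S n)) (delta0 p) :=
    ⟨hp0, hchain.rowSum, hAne, hmix, hδ1, hδle, hε0, hεS, hεη⟩
  obtain ⟨s₀, hs₀⟩ := hne n
  obtain ⟨lam, f, ⟨hl1, hl2⟩, heig, hbnd⟩ :=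
    hc.exists_eigen pi hchain.piPos hchain.piSum.summable hchain.piStat hchain.irred hs₀
  refine ⟨lam, f, ⟨hl1, hl2⟩, fun i hi => heig i hi, fun i hi => ?_⟩
  obtain ⟨hb1, hb2⟩ := hbnd i hi
  refine ⟨hb1, le_trans hb2 ?_⟩
  have hC6 : TemEig.Cinf (delta0 p) (epsSup p (S n)) ≤ 6 * epsSup p (S n) / delta0 p :=
    hc.Cinf_le_six
  have h650 : 6 * epsSup p (S n) / delta0 p ≤ 3/50 := hc.six_eps_le
  have h6 : (6 / delta0 p) * epsSup p (S n) = 6 * epsSup p (S n) / delta0 p := by ring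
  have hpos : (0:ℝ) < 1 - (6 / delta0 p) * epsSup p (S n) := by
    rw [h6]; linarith
  apply one_div_le_one_div_of_le hpos
  rw [h6]
  linarith
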